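/- Let Δ be a quasi-forest with leaf order F_1,...,F_q and let G_i denote a branch of F_i in ⟨F_1,...,F_i⟩. If a subset H belongs to the set A* of intersections F_{i_1} ∩ ... ∩ F_{i_j} (j ≥ 2, i_1 < ... < i_j) occurring with multiplicity 1 in the multiset A of all such intersections, then H = G_i ∩ F_i for some 1 < i ≤ q. -/
import Mathlib


open Finset

attribute [local instance] Classical.propDecidable

variable {V : Type} [Fintype V] [DecidableEq V]

/-- `F` is a facet (maximal face) of the simplicial complex `Δ`. -/
def IsFacet (Δ : Set (Finset V)) (F : Finset V) : Prop :=
  F ∈ Δ ∧ ∀ s ∈ Δ, F ⊆ s → s = F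

/-- The subcomplex `⟨F_1, …, F_i⟩` generated by the facets `F j` for `j ≤ i`. -/
def gen (q : ℕ) (F : Fin q → Finset V) (i : Fin q) : Set (Finset V) :=
  {s | ∃ j ≤ i, s ⊆ F j}

/-- `B` is a branch of the facet `Fc` in `Δ`: `B` is a facet different from `Fc`
such that `H ∩ Fc ⊆ B ∩ Fc` for every facet `H ≠ Fc`. -/
def IsBranch (Δ : Set (Finset V)) (Fc B : Finset V) : Prop :=
  IsFacet Δ B ∧ B ≠ Fc ∧ ∀ H, IsFacet Δ H → H ≠ Fc → H ∩ Fc ⊆ B ∩ Fc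

/-- `Fc` is a leaf of `Δ`: a facet admitting a branch. -/
def IsLeaf (Δ : Set (Finset V)) (Fc : Finset V) : Prop :=
  IsFacet Δ Fc ∧ ∃ B, IsBranch Δ Fc B

/-- `F : Fin q → Finset V` is a leaf order of `Δ`: an enumeration `F_1, …, F_q` of the
facets of `Δ` such that each `F_i` (`i > 1`) is a leaf of `⟨F_1, …, F_i⟩`. -/
def IsLeafOrder (Δ : Set (Finset V)) (q : ℕ) (F : Fin q → Finset V) : Prop :=
  Function.Injective F ∧ (∀ i, IsFacet Δ (F i)) ∧ (∀ s, IsFacet Δ s → ∃ i, F i = s) ∧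
    ∀ i : Fin q, 0 < (i : ℕ) → IsLeaf (gen q F i) (F i)

/-- The multiset `A` of all intersections `F_{i_1} ∩ ⋯ ∩ F_{i_j}` with `j ≥ 2`. -/
noncomputable def interMultiset (q : ℕ) (F : Fin q → Finset V) : Multiset (Finset V) :=
  (Finset.univ.powerset.filter fun T : Finset (Fin q) => 2 ≤ T.card).val.map
    fun T => T.inf F

/-- If `H` belongs to the set `A*` of intersections of at least two of the `F_i`
occurring with multiplicity one, then `H = G_i ∩ F_i` for some `i > 1`, where `G_i`
is a branch of `F_i` in `⟨F_1, …, F_i⟩`. -/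
theorem mem_Astar_eq_branch_inter (Δ : Set (Finset V)) (q : ℕ) (F : Fin q → Finset V)
    (hΔ : ∀ s ∈ Δ, ∀ t ⊆ s, t ∈ Δ) (hord : IsLeafOrder Δ q F)
    (G : Fin q → Finset V) (hG : ∀ i : Fin q, 0 < (i : ℕ) → IsBranch (gen q F i) (F i) (G i))
    (H : Finset V) (hH : (interMultiset q F).count H = 1) :
    ∃ i : Fin q, 0 < (i : ℕ) ∧ H = G i ∩ F i := by
  classical
  obtain ⟨hinj, hfac, -, -⟩ := hord
  -- rewrite the count as a Finset card
  have hcount : (interMultiset q F).count H =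
      ((Finset.univ.powerset.filter fun T : Finset (Fin q) => 2 ≤ T.card).filter
        (fun T => H = T.inf F)).card := by
    rw [interMultiset, Multiset.count_map]
    rfl
  rw [hcount, Finset.filter_filter] at hH
  obtain ⟨T, hT⟩ := Finset.card_eq_one.mp hH
  have hTmem : T ∈ (Finset.univ.powerset.filter
      fun T : Finset (Fin q) => (2 ≤ T.card) ∧ H = T.inf F) := by
    rw [hT]; exact Finset.mem_singleton_self T
  rw [Finset.mem_filter] at hTmem
  obtain ⟨-, hT2, hTH⟩ := hTmem
  have huniq : ∀ T' : Finset (Fin q), 2 ≤ T'.card → H = T'.inf F → T' = T := by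
    intro T' h1 h2
    have : T' ∈ (Finset.univ.powerset.filter
        fun T : Finset (Fin q) => (2 ≤ T.card) ∧ H = T.inf F) := by
      rw [Finset.mem_filter]
      exact ⟨Finset.mem_powerset.mpr (Finset.subset_univ _), h1, h2⟩
    rw [hT] at this
    exact Finset.mem_singleton.mp this
  -- basic facts about T
  have hTne : T.Nonempty := Finset.card_pos.mp (by omega)
  set i : Fin q := T.max' hTne with hidef
  have hiT : i ∈ T := T.max'_mem hTne
  have hmax : ∀ j ∈ T, j ≤ i := fun j hj => T.le_max' j hj
  obtain ⟨j0, hj0T, hj0ne⟩ := Finset.exists_mem_ne (lt_of_lt_of_le one_lt_two hT2) i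
  have hj0lt : j0 < i := lt_of_le_of_ne (hmax j0 hj0T) hj0ne
  have hipos : 0 < (i : ℕ) := lt_of_le_of_lt (Nat.zero_le _) hj0lt
  -- each F j with j ≤ i is a facet of gen q F i
  have hfacgen : ∀ j : Fin q, j ≤ i → IsFacet (gen q F i) (F j) := by
    intro j hj
    refine ⟨⟨j, hj, subset_rfl⟩, ?_⟩
    rintro s ⟨l, -, hsl⟩ hFjs
    exact (hfac j).2 s (hΔ (F l) (hfac l).1 s hsl) hFjs
  obtain ⟨hGfac, hGne, hGbr⟩ := hG i hipos
  -- G i = F k for some k ≤ i, k ≠ i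
  obtain ⟨k, hki, hGk⟩ := hGfac.1
  have hGkeq : F k = G i := hGfac.2 (F k) ⟨k, hki, subset_rfl⟩ hGk
  have hkne : k ≠ i := by
    intro h; exact hGne (by rw [← hGkeq, h])
  -- H ⊆ G i ∩ F i
  have hHsub : H ⊆ G i ∩ F i := by
    have h1 : H ⊆ F j0 ∩ F i := by
      rw [hTH]
      exact Finset.subset_inter (Finset.inf_le hj0T) (Finset.inf_le hiT)
    exact h1.trans (hGbr (F j0) (hfacgen j0 hj0lt.le) (fun h => hj0ne (hinj h)))
  have hHk : H ⊆ F k := by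
    rw [hGkeq]; exact hHsub.trans Finset.inter_subset_left
  -- k ∈ T
  have hkT : k ∈ T := by
    have heq : insert k T = T := by
      apply huniq
      · exact le_trans hT2 (Finset.card_le_card (Finset.subset_insert k T))
      · rw [Finset.inf_insert, ← hTH]
        exact (Finset.inter_eq_right.mpr hHk).symm
    rw [← heq]; exact Finset.mem_insert_self k T
  -- T ⊆ {i, k}
  have hTsub : ∀ j ∈ T, j = i ∨ j = k := by
    by_contra hcon
    push_neg at hcon
    obtain ⟨j, hjT, hjne_i, hjne_k⟩ := hcon
    have hji : j < i := lt_of_le_of_ne (hmax j hjT) hjne_i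
    have herase : T.erase k = T := by
      apply huniq
      · have : i ∈ T.erase k := Finset.mem_erase.mpr ⟨Ne.symm hkne, hiT⟩
        have : j ∈ T.erase k := Finset.mem_erase.mpr ⟨hjne_k, hjT⟩
        have h2 : ({i, j} : Finset (Fin q)) ⊆ T.erase k := by
          intro x hx
          rcases Finset.mem_insert.mp hx with h | h
          · subst h; exact Finset.mem_erase.mpr ⟨Ne.symm hkne, hiT⟩
          · rw [Finset.mem_singleton.mp h]; exact Finset.mem_erase.mpr ⟨hjne_k, hjT⟩
        calc 2 = ({i, j} : Finset (Fin q)).card := by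
                  rw [Finset.card_insert_of_notMem (by simp [hjne_i.symm]),
                    Finset.card_singleton]
             _ ≤ (T.erase k).card := Finset.card_le_card h2
      · -- H = (T.erase k).inf F
        have hsubk : (T.erase k).inf F ⊆ F k := by
          have h1 : (T.erase k).inf F ⊆ F j ∩ F i :=
            Finset.subset_inter (Finset.inf_le (Finset.mem_erase.mpr ⟨hjne_k, hjT⟩))
              (Finset.inf_le (Finset.mem_erase.mpr ⟨Ne.symm hkne, hiT⟩))
          have h2 : F j ∩ F i ⊆ G i ∩ F i :=
            hGbr (F j) (hfacgen j hji.le) (fun h => hjne_i (hinj h))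
          rw [← hGkeq] at h2
          exact (h1.trans h2).trans Finset.inter_subset_left
        have : T.inf F = F k ⊓ (T.erase k).inf F := by
          rw [← Finset.inf_insert, Finset.insert_erase hkT]
        rw [hTH, this]
        exact inf_eq_right.mpr hsubk
    have : k ∉ T.erase k := Finset.notMem_erase k T
    rw [herase] at this
    exact this hkT
  -- hence T = {i, k} and H = F i ∩ F k = G i ∩ F i
  refine ⟨i, hipos, ?_⟩
  apply Finset.Subset.antisymm hHsub
  have : ({i, k} : Finset (Fin q)).inf F ≤ T.inf F := by
    apply Finset.le_inf
    intro j hjT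
    rcases hTsub j hjT with h | h <;> subst h
    · exact Finset.inf_le (Finset.mem_insert_self i _)
    · exact Finset.inf_le (by simp)
  rw [hTH]
  refine le_trans ?_ this
  rw [Finset.inf_insert, Finset.inf_singleton, ← hGkeq]
  exact le_of_eq (Finset.inter_comm _ _)
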